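/- On the quotient Hilbert space H = (H¹(Ω) ⊕ ℂ^m)/ℂ equipped with ‖(v,V)‖_H² = ∫_Ω|∇v|² + ‖T̃v − V‖²_{L²(𝓔)}, the SCEM sesquilinear form a_A[(w,W),(v,V)] = ⟨w,v⟩_A + ∫_{∂Ω} ζ (T̃w−W) conj(T̃v−V) dS satisfies the coercivity bound |a_A[(v,V),(v,V)]| ≥ Re a_A[(v,V),(v,V)] ≥ min{c_A, c_ζ} ‖(v,V)‖_H². -/

import Mathlib

/- Statement 12: coercivity of the SCEM sesquilinear form.  On the quotient
space `H = (H¹(Ω) ⊕ ℂ^m)/ℂ` with `‖(v,V)‖_H² = ∫_Ω|∇v|² + ‖T̃v − V‖²_{L²(𝓔)}`,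
the form `a_A[(v,V),(v,V)] = ⟨v,v⟩_A + ∫_{∂Ω} ζ |T̃v−V|² dS` satisfies
`|a_A[(v,V),(v,V)]| ≥ Re a_A[(v,V),(v,V)] ≥ min{c_A,c_ζ} ‖(v,V)‖_H²`.
A generic element is represented by its gradient `G = ∇v ∈ L²(Ω;ℂ^d)` and the
boundary function `w = T̃v − V ∈ L²(∂Ω)`; `μ` is the measure on `Ω`, `ν` the
surface measure on `∂Ω`, `E = ∪ E_j` the electrodes, `𝓔 ⊆ E` the subset where
`Re ζ ≥ c_ζ`. -/

open MeasureTheory Matrix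

noncomputable section

theorem stmt12 {d : ℕ} {Y : Type*} [MeasurableSpace Y]
    (μ : Measure (EuclideanSpace ℝ (Fin d))) (ν : Measure Y)
    (A : EuclideanSpace ℝ (Fin d) → Matrix (Fin d) (Fin d) ℂ) (cA : ℝ)
    (ζ : Y → ℂ) (E 𝓔 : Set Y) (cζ : ℝ)
    -- `A ∈ L^∞_+(Ω)` with constant `c_A`
    (hcA : 0 < cA)
    (hAcoer : ∀ᵐ x ∂μ, ∀ ξ : EuclideanSpace ℂ (Fin d),
      cA * ‖ξ‖ ^ 2 ≤ (inner ℂ ξ (Matrix.toEuclideanCLM (𝕜 := ℂ) (A x) ξ) : ℂ).re)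
    -- the contact admittance
    (hcζ : 0 < cζ) (h𝓔E : 𝓔 ⊆ E) (h𝓔 : MeasurableSet 𝓔)
    (hζ0 : ∀ᵐ y ∂ν, 0 ≤ (ζ y).re)
    (hζsupp : ∀ᵐ y ∂ν, y ∉ E → ζ y = 0)
    (hζ𝓔 : ∀ᵐ y ∂(ν.restrict 𝓔), cζ ≤ (ζ y).re)
    -- data of a generic element `(v,V)`: gradient and boundary discrepancy
    (G : EuclideanSpace ℝ (Fin d) → EuclideanSpace ℂ (Fin d)) (w : Y → ℂ)
    (hG : MemLp G 2 μ) (hw : MemLp w 2 ν)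
    (hint1 : Integrable
      (fun x => (inner ℂ (G x) (Matrix.toEuclideanCLM (𝕜 := ℂ) (A x) (G x)) : ℂ)) μ)
    (hint2 : Integrable (fun y => ζ y * (‖w y‖ : ℂ) ^ 2) ν) :
    min cA cζ * ((∫ x, ‖G x‖ ^ 2 ∂μ) + ∫ y in 𝓔, ‖w y‖ ^ 2 ∂ν) ≤
      ((∫ x, (inner ℂ (G x) (Matrix.toEuclideanCLM (𝕜 := ℂ) (A x) (G x)) : ℂ) ∂μ) +
        ∫ y, ζ y * (‖w y‖ : ℂ) ^ 2 ∂ν).re ∧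
    ((∫ x, (inner ℂ (G x) (Matrix.toEuclideanCLM (𝕜 := ℂ) (A x) (G x)) : ℂ) ∂μ) +
        ∫ y, ζ y * (‖w y‖ : ℂ) ^ 2 ∂ν).re ≤
      ‖(∫ x, (inner ℂ (G x) (Matrix.toEuclideanCLM (𝕜 := ℂ) (A x) (G x)) : ℂ) ∂μ) +
        ∫ y, ζ y * (‖w y‖ : ℂ) ^ 2 ∂ν‖ := by
  constructor
  · -- coercivity
    have hG2 : Integrable (fun x => ‖G x‖ ^ 2) μ := hG.norm.integrable_sq
    have hw2 : Integrable (fun y => ‖w y‖ ^ 2) (ν.restrict 𝓔) :=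
      (hw.restrict 𝓔).norm.integrable_sq
    have hposG : 0 ≤ ∫ x, ‖G x‖ ^ 2 ∂μ := integral_nonneg fun x => sq_nonneg _
    have hposw : 0 ≤ ∫ y in 𝓔, ‖w y‖ ^ 2 ∂ν := integral_nonneg fun y => sq_nonneg _
    have hgre : (fun y => (ζ y * (‖w y‖ : ℂ) ^ 2).re) = fun y => (ζ y).re * ‖w y‖ ^ 2 := by
      funext y
      simp [← Complex.ofReal_pow]
    have hint2' : Integrable (fun y => (ζ y).re * ‖w y‖ ^ 2) ν := by
      have h := hint2.re
      simp only [RCLike.re_to_complex] at h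
      rwa [hgre] at h
    have h1 : cA * ∫ x, ‖G x‖ ^ 2 ∂μ ≤
        ∫ x, (inner ℂ (G x) (Matrix.toEuclideanCLM (𝕜 := ℂ) (A x) (G x)) : ℂ).re ∂μ := by
      rw [← integral_const_mul]
      refine integral_mono_ae (hG2.const_mul cA)
        (by simpa [RCLike.re_to_complex] using hint1.re) ?_
      filter_upwards [hAcoer] with x hx using hx (G x)
    have h2b : cζ * ∫ y in 𝓔, ‖w y‖ ^ 2 ∂ν ≤ ∫ y in 𝓔, (ζ y).re * ‖w y‖ ^ 2 ∂ν := by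
      rw [← integral_const_mul]
      refine integral_mono_ae (hw2.const_mul cζ) (hint2'.restrict) ?_
      filter_upwards [hζ𝓔] with y hy using mul_le_mul_of_nonneg_right hy (sq_nonneg _)
    have h2a : ∫ y in 𝓔, (ζ y).re * ‖w y‖ ^ 2 ∂ν ≤ ∫ y, (ζ y).re * ‖w y‖ ^ 2 ∂ν := by
      refine setIntegral_le_integral hint2' ?_
      filter_upwards [hζ0] with y hy
      exact mul_nonneg hy (sq_nonneg _)
    have hre : ((∫ x, (inner ℂ (G x) (Matrix.toEuclideanCLM (𝕜 := ℂ) (A x) (G x)) : ℂ) ∂μ) +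
        ∫ y, ζ y * (‖w y‖ : ℂ) ^ 2 ∂ν).re =
        (∫ x, (inner ℂ (G x) (Matrix.toEuclideanCLM (𝕜 := ℂ) (A x) (G x)) : ℂ).re ∂μ) +
        ∫ y, (ζ y).re * ‖w y‖ ^ 2 ∂ν := by
      have e1 := integral_re hint1
      have e2 := integral_re hint2
      simp only [RCLike.re_to_complex] at e1 e2
      rw [Complex.add_re, ← e1, ← e2, hgre]
    calc min cA cζ * ((∫ x, ‖G x‖ ^ 2 ∂μ) + ∫ y in 𝓔, ‖w y‖ ^ 2 ∂ν)
        = min cA cζ * (∫ x, ‖G x‖ ^ 2 ∂μ) + min cA cζ * ∫ y in 𝓔, ‖w y‖ ^ 2 ∂ν := mul_add _ _ _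
      _ ≤ cA * (∫ x, ‖G x‖ ^ 2 ∂μ) + cζ * ∫ y in 𝓔, ‖w y‖ ^ 2 ∂ν := by
          gcongr
          exacts [min_le_left _ _, min_le_right _ _]
      _ ≤ _ := by
          rw [hre]
          exact add_le_add h1 (h2b.trans h2a)
  · exact Complex.re_le_norm _

end
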